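/- Assume F is monotone and cocoercive with constant τ > 0 on a closed convex set M, Fréchet differentiable with F' Lipschitz with constant L on M, and that u⋆ ∈ M satisfies F u⋆ = f and the adjoint source condition u⋆ = F'(u⋆)* z for some z ∈ H with ρ = ‖z‖ and ρL < 2. Let u_α ∈ M solve ⟨F u_α + α u_α - f, v - u_α⟩ ≥ 0 for all v ∈ M. Then τ‖F u_α - f‖ ≤ ρα. -/

import Mathlib

open RealInnerProductSpace Set

lemma taylor_half {H : Type*} [NormedAddCommGroup H] [InnerProductSpace ℝ H]
    (D : Set H) (hD : IsOpen D) (M : Set H) (hMD : M ⊆ D) (hMc : Convex ℝ M)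
    (F : H → H) (F' : H → H →L[ℝ] H)
    (hdiff : ∀ u ∈ D, HasFDerivAt F (F' u) u)
    (L : ℝ) (hLip : ∀ u ∈ M, ∀ v ∈ M, ‖F' u - F' v‖ ≤ L * ‖u - v‖)
    (a : H) (ha : a ∈ M) (b : H) (hb : b ∈ M) :
    ‖F b - F a - F' a (b - a)‖ ≤ L / 2 * ‖b - a‖ ^ 2 := by
  set d := b - a with hd
  set g : ℝ → H := fun t => F (a + t • d) - F a - t • (F' a d) with hg
  have hseg : ∀ t ∈ Icc (0:ℝ) 1, a + t • d ∈ M := by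
    intro t ht
    have := hMc ha hb (a := 1 - t) (b := t) (by linarith [ht.2]) ht.1 (by ring)
    convert this using 1
    simp [hd]
    module
  have hderiv : ∀ t ∈ Icc (0:ℝ) 1,
      HasDerivAt g ((F' (a + t • d)) d - F' a d) t := by
    intro t ht
    have h1 : HasDerivAt (fun t : ℝ => a + t • d) d t := by
      simpa using ((hasDerivAt_id t).smul_const d).const_add a
    have h2 : HasDerivAt (fun t : ℝ => F (a + t • d)) ((F' (a + t • d)) d) t := by
      have := (hdiff _ (hMD (hseg t ht))).comp_hasDerivAt t h1
      exact this
    have h3 : HasDerivAt (fun t : ℝ => t • (F' a d)) (F' a d) t := by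
      simpa using (hasDerivAt_id t).smul_const (F' a d)
    exact (h2.sub_const (F a)).sub h3
  have hcont : ContinuousOn g (Icc (0:ℝ) 1) := fun t ht =>
    (hderiv t ht).continuousAt.continuousWithinAt
  have hderiv' : ∀ t ∈ Ico (0:ℝ) 1,
      HasDerivWithinAt g ((F' (a + t • d)) d - F' a d) (Ici t) t := fun t ht =>
    (hderiv t (Ico_subset_Icc_self ht)).hasDerivWithinAt
  have ha0 : ‖g 0‖ ≤ L * ‖d‖ ^ 2 * (0:ℝ) ^ 2 / 2 := by simp [hg]
  have hB : ∀ t : ℝ, HasDerivAt (fun t : ℝ => L * ‖d‖ ^ 2 * t ^ 2 / 2) (L * ‖d‖ ^ 2 * t) t := by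
    intro t
    have := ((hasDerivAt_pow 2 t).const_mul (L * ‖d‖ ^ 2)).div_const 2
    refine this.congr_deriv ?_
    ring
  have bound : ∀ t ∈ Ico (0:ℝ) 1, ‖(F' (a + t • d)) d - F' a d‖ ≤ L * ‖d‖ ^ 2 * t := by
    intro t ht
    have h1 : ‖(F' (a + t • d)) d - F' a d‖ ≤ ‖F' (a + t • d) - F' a‖ * ‖d‖ := by
      have := (F' (a + t • d) - F' a).le_opNorm d
      simpa using this
    have h2 : ‖F' (a + t • d) - F' a‖ ≤ L * ‖t • d‖ := by
      have := hLip _ (hseg t (Ico_subset_Icc_self ht)) a ha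
      simpa using this
    have h3 : ‖t • d‖ = t * ‖d‖ := by
      rw [norm_smul, Real.norm_eq_abs, abs_of_nonneg ht.1]
    calc ‖(F' (a + t • d)) d - F' a d‖ ≤ L * (t * ‖d‖) * ‖d‖ := by
          rw [← h3]; exact h1.trans (by nlinarith [norm_nonneg d, h2, norm_nonneg (t • d)])
      _ = L * ‖d‖ ^ 2 * t := by ring
  have key := image_norm_le_of_norm_deriv_right_le_deriv_boundary
    (B := fun t : ℝ => L * ‖d‖ ^ 2 * t ^ 2 / 2) hcont hderiv' ha0 hB bound
  have := key (by norm_num : (1:ℝ) ∈ Icc (0:ℝ) 1)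
  have hg1 : g 1 = F b - F a - F' a d := by simp [hg, hd]
  rw [hg1] at this
  calc ‖F b - F a - F' a (b - a)‖ = ‖F b - F a - F' a d‖ := by rw [hd]
    _ ≤ L * ‖d‖ ^ 2 * 1 ^ 2 / 2 := this
    _ = L / 2 * ‖b - a‖ ^ 2 := by rw [hd]; ring

theorem stmt_10 {H : Type*} [NormedAddCommGroup H] [InnerProductSpace ℝ H]
    [CompleteSpace H]
    (D : Set H) (hD : IsOpen D) (M : Set H) (hMD : M ⊆ D)
    (hM : IsClosed M) (hMc : Convex ℝ M)
    (F : H → H) (F' : H → H →L[ℝ] H)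
    (hdiff : ∀ u ∈ D, HasFDerivAt F (F' u) u)
    (τ : ℝ) (hτ : 0 < τ)
    (hmono : ∀ u ∈ M, ∀ v ∈ M, ⟪F u - F v, u - v⟫ ≥ 0)
    (hcoco : ∀ u ∈ M, ∀ v ∈ M, ⟪F u - F v, u - v⟫ ≥ τ * ‖F u - F v‖ ^ 2)
    (L : ℝ) (hL : 0 ≤ L)
    (hLip : ∀ u ∈ M, ∀ v ∈ M, ‖F' u - F' v‖ ≤ L * ‖u - v‖)
    (ustar : H) (hustar : ustar ∈ M) (f : H) (hsol : F ustar = f)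
    (z : H) (hsource : ustar = ContinuousLinearMap.adjoint (F' ustar) z)
    (ρ : ℝ) (hρ : ρ = ‖z‖) (hρL : ρ * L < 2)
    (α : ℝ) (hα : 0 < α)
    (uα : H) (huα : uα ∈ M)
    (hVI : ∀ v ∈ M, ⟪F uα + α • uα - f, v - uα⟫ ≥ 0) :
    τ * ‖F uα - f‖ ≤ ρ * α := by
  set e := F uα - f with he
  set w := uα - ustar with hw
  have hρ0 : 0 ≤ ρ := hρ ▸ norm_nonneg z
  -- VI with v = ustar
  have h1 : ⟪e, w⟫ + α * ⟪uα, w⟫ ≤ 0 := by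
    have := hVI ustar hustar
    have h : ustar - uα = -w := by rw [hw]; abel
    rw [h] at this
    simp only [inner_neg_right, inner_add_left, inner_sub_left, inner_smul_left,
      RCLike.star_def, starRingEnd_apply, star_trivial] at this
    simp only [he, inner_sub_left]
    linarith [this]
  -- cocoercivity
  have h2 : ⟪e, w⟫ ≥ τ * ‖e‖ ^ 2 := by
    have := hcoco uα huα ustar hustar
    rwa [hsol] at this
  -- expand ⟪uα, w⟫
  have h3 : ⟪uα, w⟫ = ‖w‖ ^ 2 + ⟪ustar, w⟫ := by
    have : uα = w + ustar := by rw [hw]; abel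
    rw [this, inner_add_left, real_inner_self_eq_norm_sq]
  -- source condition
  have h4 : ⟪ustar, w⟫ = ⟪z, F' ustar w⟫ := by
    conv_lhs => rw [hsource]
    exact ContinuousLinearMap.adjoint_inner_left _ _ _
  -- Taylor
  set r := F uα - F ustar - F' ustar w with hr
  have h5 : ‖r‖ ≤ L / 2 * ‖w‖ ^ 2 :=
    taylor_half D hD M hMD hMc F F' hdiff L hLip ustar hustar uα huα
  have h6 : F' ustar w = e - r := by rw [hr, hsol, he]; abel
  have h7 : ⟪z, F' ustar w⟫ ≥ -(ρ * ‖e‖) - ρ * (L / 2 * ‖w‖ ^ 2) := by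
    rw [h6, inner_sub_right]
    have hz1 : |⟪z, e⟫| ≤ ρ * ‖e‖ := by
      rw [hρ]; exact abs_real_inner_le_norm z e
    have hz2 : |⟪z, r⟫| ≤ ρ * (L / 2 * ‖w‖ ^ 2) := by
      rw [hρ]
      exact (abs_real_inner_le_norm z r).trans
        (mul_le_mul_of_nonneg_left h5 (norm_nonneg z))
    have := abs_le.1 hz1
    have := abs_le.1 hz2
    linarith [(abs_le.1 hz1).1, (abs_le.1 hz2).2]
  -- combine
  have hkey : τ * ‖e‖ ^ 2 ≤ ρ * α * ‖e‖ := by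
    have hw2 : (0:ℝ) ≤ ‖w‖ ^ 2 := sq_nonneg _
    have hA : ⟪ustar, w⟫ ≥ -(ρ * ‖e‖) - ρ * (L / 2 * ‖w‖ ^ 2) := by rw [h4]; exact h7
    have hB : α * (‖w‖ ^ 2 - ρ * ‖e‖ - ρ * (L / 2 * ‖w‖ ^ 2)) ≤ α * ⟪uα, w⟫ :=
      mul_le_mul_of_nonneg_left (by linarith) hα.le
    have hC : 0 ≤ α * (2 - ρ * L) * ‖w‖ ^ 2 :=
      mul_nonneg (mul_nonneg hα.le (by linarith)) hw2
    nlinarith [h1, h2, hB, hC]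
  rcases eq_or_lt_of_le (norm_nonneg e) with h0 | h0
  · rw [← h0, mul_zero]; exact mul_nonneg hρ0 hα.le
  · have := (mul_le_mul_iff_of_pos_right h0).1 (by nlinarith : τ * ‖e‖ * ‖e‖ ≤ ρ * α * ‖e‖)
    linarith
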